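/- Let D be a binary code of length n. For γ ∈ F_2^n define η(γ): D → F_2^n/D^⊥ by η(γ)(β) = γ·β + D^⊥, where γ·β denotes the coordinatewise product. Then the kernel of η equals (D·D)^⊥, where D·D is the span of all coordinatewise products β·β' with β, β' ∈ D. Consequently dim(image of η) = dim(D·D). -/

import Mathlib

def wt {ι : Type*} [Fintype ι] (x : ι → ZMod 2) : ℕ :=
  (Finset.univ.filter fun i => x i ≠ 0).card

def dualCode {ι : Type*} [Fintype ι] (D : Submodule (ZMod 2) (ι → ZMod 2)) :
    Submodule (ZMod 2) (ι → ZMod 2) where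
  carrier := {x | ∀ y ∈ D, dotProduct x y = 0}
  add_mem' := fun ha hb y hy => by
    simp only [add_dotProduct]
    rw [ha y hy, hb y hy, add_zero]
  zero_mem' := fun y hy => by simp
  smul_mem' := fun c x hx y hy => by
    simp only [smul_dotProduct]
    rw [hx y hy, smul_zero]

def DdotD {ι : Type*} [Fintype ι] (D : Submodule (ZMod 2) (ι → ZMod 2)) :
    Submodule (ZMod 2) (ι → ZMod 2) :=
  Submodule.span (ZMod 2) {z | ∃ a ∈ D, ∃ b ∈ D, z = a * b}

def dotL {ι : Type*} [Fintype ι] (β : ι → ZMod 2) : (ι → ZMod 2) →ₗ[ZMod 2] ZMod 2 where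
  toFun γ := dotProduct γ β
  map_add' a b := add_dotProduct a b β
  map_smul' c a := smul_dotProduct c a β

def qpair {ι : Type*} [Fintype ι] (D : Submodule (ZMod 2) (ι → ZMod 2)) (β : ι → ZMod 2)
    (hβ : β ∈ D) : ((ι → ZMod 2) ⧸ dualCode D) →ₗ[ZMod 2] ZMod 2 :=
  Submodule.liftQ (dualCode D) (dotL β) (fun γ hγ => LinearMap.mem_ker.mpr (hγ β hβ))

def eta {ι : Type*} [Fintype ι] (D : Submodule (ZMod 2) (ι → ZMod 2)) (γ : ι → ZMod 2) :
    (↥D) →ₗ[ZMod 2] ((ι → ZMod 2) ⧸ dualCode D) where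
  toFun β := Submodule.Quotient.mk (γ * ↑β)
  map_add' a b := by
    simp only [Submodule.coe_add, mul_add, ← Submodule.Quotient.mk_add]
  map_smul' c a := by
    simp only [Submodule.coe_smul, mul_smul_comm, ← Submodule.Quotient.mk_smul, RingHom.id_apply]

def etaMap {ι : Type*} [Fintype ι] (D : Submodule (ZMod 2) (ι → ZMod 2)) :
    (ι → ZMod 2) →ₗ[ZMod 2] ((↥D) →ₗ[ZMod 2] ((ι → ZMod 2) ⧸ dualCode D)) where
  toFun := eta D
  map_add' a b := LinearMap.ext fun β => by
    simp only [eta, LinearMap.coe_mk, AddHom.coe_mk, LinearMap.add_apply, add_mul,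
      ← Submodule.Quotient.mk_add] <;> rfl
  map_smul' c a := LinearMap.ext fun β => by
    simp only [eta, LinearMap.coe_mk, AddHom.coe_mk, LinearMap.smul_apply, smul_mul_assoc,
      ← Submodule.Quotient.mk_smul, RingHom.id_apply] <;> rfl

/-- For a binary code `D ⊆ F₂ⁿ` and `γ ∈ F₂ⁿ`, let `η(γ) : D → F₂ⁿ/D^⊥` be
`β ↦ γ·β + D^⊥` (coordinatewise product).  Then `ker η = (D·D)^⊥` and consequently
`dim (im η) = dim (D·D)`. -/

def dotForm (ι : Type*) [Fintype ι] : LinearMap.BilinForm (ZMod 2) (ι → ZMod 2) :=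
  LinearMap.mk₂ (ZMod 2) (fun x y => dotProduct x y)
    (fun a b c => add_dotProduct a b c)
    (fun c a b => smul_dotProduct c a b)
    (fun a b c => dotProduct_add a b c)
    (fun c a b => dotProduct_smul c a b)

lemma dotForm_apply (ι : Type*) [Fintype ι] (x y : ι → ZMod 2) :
    dotForm ι x y = dotProduct x y := rfl

lemma dotForm_isRefl (ι : Type*) [Fintype ι] [DecidableEq ι] : (dotForm ι).IsRefl := by
  intro x y h
  rw [dotForm_apply, dotProduct_comm]
  exact h

lemma dotForm_nondegenerate (ι : Type*) [Fintype ι] [DecidableEq ι] :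
    (dotForm ι).Nondegenerate := by
  refine (LinearMap.IsRefl.nondegenerate_iff_separatingLeft (dotForm_isRefl ι)).mpr ?_
  intro x hx
  funext i
  have := hx (Pi.single i 1)
  rwa [dotForm_apply, dotProduct_single, mul_one] at this

lemma dualCode_eq_orthogonal (n : ℕ) (W : Submodule (ZMod 2) (Fin n → ZMod 2)) :
    dualCode W = (dotForm (Fin n)).orthogonal W := by
  ext x
  constructor
  · intro hx y hy
    have := hx y hy
    rwa [dotForm_apply, dotProduct_comm]
  · intro hx y hy
    have := hx y hy
    rwa [dotForm_apply, dotProduct_comm] at this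

lemma finrank_dualCode (n : ℕ) (W : Submodule (ZMod 2) (Fin n → ZMod 2)) :
    Module.finrank (ZMod 2) (dualCode W) = n - Module.finrank (ZMod 2) W := by
  rw [dualCode_eq_orthogonal, LinearMap.BilinForm.finrank_orthogonal (dotForm_nondegenerate _)
    W, Module.finrank_fintype_fun_eq_card, Fintype.card_fin]

lemma mem_dualCode_span_iff {ι : Type*} [Fintype ι] (S : Set (ι → ZMod 2)) (x : ι → ZMod 2) :
    x ∈ dualCode (Submodule.span (ZMod 2) S) ↔ ∀ z ∈ S, dotProduct x z = 0 := by
  constructor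
  · intro hx z hz
    exact hx z (Submodule.subset_span hz)
  · intro h y hy
    have : Submodule.span (ZMod 2) S ≤ LinearMap.ker (dotForm _ x) := by
      rw [Submodule.span_le]
      intro z hz
      exact h z hz
    exact this hy

theorem ker_eta_eq_dual_DdotD (n : ℕ) (D : Submodule (ZMod 2) (Fin n → ZMod 2)) :
    LinearMap.ker (etaMap D) = dualCode (DdotD D) ∧
    Module.finrank (ZMod 2) (LinearMap.range (etaMap D)) =
      Module.finrank (ZMod 2) (DdotD D) := by
  have hker : LinearMap.ker (etaMap D) = dualCode (DdotD D) := by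
    ext γ
    rw [LinearMap.mem_ker]
    constructor
    · intro h
      rw [DdotD, mem_dualCode_span_iff]
      rintro z ⟨a, ha, b, hb, rfl⟩
      have h1 : (etaMap D γ) ⟨a, ha⟩ = 0 := by rw [h]; rfl
      have h1' : (Submodule.Quotient.mk (γ * a) : (Fin n → ZMod 2) ⧸ dualCode D) = 0 := h1
      have h2 : γ * a ∈ dualCode D := by
        rwa [Submodule.Quotient.mk_eq_zero] at h1' 
      have h3 := h2 b hb
      calc dotProduct γ (a * b) = dotProduct (γ * a) b := by
            simp [dotProduct, mul_assoc]
        _ = 0 := h3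
    · intro h
      apply LinearMap.ext
      rintro ⟨a, ha⟩
      show Submodule.Quotient.mk (γ * a) = 0
      rw [Submodule.Quotient.mk_eq_zero]
      intro b hb
      have h3 : dotProduct γ (a * b) = 0 :=
        h (a * b) (Submodule.subset_span ⟨a, ha, b, hb, rfl⟩)
      calc dotProduct (γ * a) b = dotProduct γ (a * b) := by
            simp [dotProduct, mul_assoc]
        _ = 0 := h3
  refine ⟨hker, ?_⟩
  have hrn := LinearMap.finrank_range_add_finrank_ker (etaMap D)
  rw [hker, finrank_dualCode, Module.finrank_fintype_fun_eq_card, Fintype.card_fin] at hrn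
  have hle : Module.finrank (ZMod 2) (DdotD D) ≤ n := by
    have := Submodule.finrank_le (DdotD D)
    rwa [Module.finrank_fintype_fun_eq_card, Fintype.card_fin] at this
  omega
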